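/- arXiv:2105.03493 — 6 statements merged into one kernel-verified Lean document; each statement's English description precedes it below -/
import Mathlib

section
/- Let I₀,…,I_{n−1} be mutually independent nonnegative random variables with continuous cumulative distribution functions F₀,…,F_{n−1}, and let 0 = t⁰ ≤ t¹ ≤ … ≤ t^{n−1} be fixed reals, with the convention t^n = ∞. Let J be the smallest index j ∈ {0,…,n−1} such that I_j < t^{j+1} − t^j (such an index exists since t^n = ∞), and define T = t^J + I_J. Then for every t ≥ 0, P(T ≤ t) = Σ_{j=0}^{n−1} F_j(min{t, t^{j+1}} − t^j)·∏_{k=0}^{j−1}(1 − F_k(t^{k+1} − t^k)), with the conventions F_j(s) = 0 for s ≤ 0 and the empty product equal to 1. -/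
open MeasureTheory ProbabilityTheory Filter Set

private lemma aux_meas_lt_eq_meas_le {Ω : Type*} [MeasurableSpace Ω] (P : Measure Ω)
    [IsProbabilityMeasure P] (f : Ω → ℝ) (hf : Measurable f) (G : ℝ → ℝ)
    (hG : ∀ u, G u = (P {ω | f ω ≤ u}).toReal) (hGc : Continuous G) (a : ℝ) :
    P {ω | f ω < a} = P {ω | f ω ≤ a} := by
  have hof : ∀ u, P {ω | f ω ≤ u} = ENNReal.ofReal (G u) := fun u => by
    rw [hG]; exact (ENNReal.ofReal_toReal (measure_ne_top _ _)).symm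
  have hunion : {ω | f ω < a} = ⋃ m : ℕ, {ω | f ω ≤ a - 1/(m+1)} := by
    ext ω
    simp only [mem_setOf_eq, mem_iUnion]
    constructor
    · intro h
      obtain ⟨m, hm⟩ := exists_nat_one_div_lt (sub_pos.2 h)
      exact ⟨m, by linarith⟩
    · rintro ⟨m, hm⟩
      have h0 : (0:ℝ) < 1/((m:ℝ)+1) := by positivity
      linarith
  have hmono : Monotone (fun m : ℕ => {ω | f ω ≤ a - 1/((m:ℝ)+1)}) := by
    intro m m' hmm ω h
    simp only [mem_setOf_eq] at h ⊢
    have h1 : (1:ℝ)/((m':ℝ)+1) ≤ 1/((m:ℝ)+1) := by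
      apply one_div_le_one_div_of_le (by positivity)
      have : (m:ℝ) ≤ (m':ℝ) := by exact_mod_cast hmm
      linarith
    linarith
  have h1 : Tendsto (fun m : ℕ => P {ω | f ω ≤ a - 1/((m:ℝ)+1)}) atTop
      (nhds (P {ω | f ω < a})) := by
    rw [hunion]; exact tendsto_measure_iUnion_atTop hmono
  have ht : Tendsto (fun m : ℕ => a - 1/((m:ℝ)+1)) atTop (nhds a) := by
    simpa using tendsto_one_div_add_atTop_nhds_zero_nat.const_sub a
  have h2 : Tendsto (fun m : ℕ => P {ω | f ω ≤ a - 1/((m:ℝ)+1)}) atTop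
      (nhds (ENNReal.ofReal (G a))) := by
    simp only [hof]
    exact (ENNReal.continuous_ofReal.tendsto _).comp ((hGc.tendsto _).comp ht)
  rw [hof a]
  exact tendsto_nhds_unique h1 h2

private lemma aux_prod_attachFin {M : Type*} [CommMonoid M] {n : ℕ} (s : Finset ℕ)
    (h : ∀ m ∈ s, m < n) (f : ℕ → M) :
    ∏ i ∈ s.attachFin h, f (i : ℕ) = ∏ m ∈ s, f m := by
  refine Finset.prod_bij (fun (i : Fin n) _ => (i : ℕ)) ?_ ?_ ?_ ?_
  · intro i hi; exact (Finset.mem_attachFin h).1 hi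
  · intro i _ i' _ hii; exact Fin.val_injective hii
  · intro m hm; exact ⟨⟨m, h m hm⟩, (Finset.mem_attachFin h).2 hm, rfl⟩
  · intro i _; rfl

/-- Distribution of the infection time built from the sequential decomposition of
equation (1): `T = t^J + I_J` where `J` is the first index `j` with
`I_j < t^{j+1} - t^j` (with `t⁰ = 0` and the convention `t^n = ∞`).  Then
`P(T ≤ s) = Σ_{j<n} F_j(min{s, t^{j+1}} - t^j) ∏_{k<j} (1 - F_k(t^{k+1} - t^k))`,
where for `j = n-1` the minimum `min{s, t^n}` is `s`. -/
theorem prob_le_of_sequential_waiting_times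
    {Ω : Type*} [MeasurableSpace Ω] (P : Measure Ω) [IsProbabilityMeasure P]
    (n : ℕ) (hn : 1 ≤ n)
    (I : ℕ → Ω → ℝ)
    (hI_meas : ∀ j, Measurable (I j))
    (hI_nonneg : ∀ j ω, 0 ≤ I j ω)
    (hindep : iIndepFun (fun j : Fin n => I j) P)
    (F : ℕ → ℝ → ℝ)
    (hF : ∀ j u, F j u = (P {ω | I j ω ≤ u}).toReal)
    (hF_cont : ∀ j, Continuous (F j))
    (t : ℕ → ℝ) (ht0 : t 0 = 0)
    (hmono : ∀ k, k + 1 < n → t k ≤ t (k + 1))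
    (J : Ω → ℕ) (T : Ω → ℝ)
    (hJ_lt : ∀ ω, J ω < n)
    (hJ_succ : ∀ ω, J ω + 1 = n ∨ I (J ω) ω < t (J ω + 1) - t (J ω))
    (hJ_min : ∀ ω k, k < J ω → t (k + 1) - t k ≤ I k ω)
    (hT : ∀ ω, T ω = t (J ω) + I (J ω) ω)
    (s : ℝ) (hs : 0 ≤ s) :
    (P {ω | T ω ≤ s}).toReal
      = ∑ j ∈ Finset.range n,
          F j ((if j + 1 = n then s else min s (t (j + 1))) - t j) *
            ∏ k ∈ Finset.range j, (1 - F k (t (k + 1) - t k)) := by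
  classical
  set Δ : ℕ → ℝ := fun k => t (k+1) - t k with hΔ
  set g : ℕ → ℕ → Set ℝ := fun j k =>
    if k < j then Ici (Δ k)
    else Iic (s - t j) ∩ (if j + 1 = n then univ else Iio (Δ j)) with hg
  set A : ℕ → Set Ω := fun j => ⋂ k ∈ Finset.range (j+1), I k ⁻¹' g j k with hA
  have hg_meas : ∀ j k, MeasurableSet (g j k) := by
    intro j k
    simp only [hg]
    split
    · exact measurableSet_Ici
    · refine measurableSet_Iic.inter ?_
      split
      · exact .univ
      · exact measurableSet_Iio
  have hA_meas : ∀ j, MeasurableSet (A j) :=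
    fun j => Finset.measurableSet_biInter _ fun k _ => (hg_meas j k) |>.preimage (hI_meas k)
  -- membership characterization
  have hAmem : ∀ j, j < n → ∀ ω, ω ∈ A j ↔ (J ω = j ∧ T ω ≤ s) := by
    intro j hj ω
    have hunf : ω ∈ A j ↔ ∀ k, k < j + 1 → I k ω ∈ g j k := by
      simp [hA, Set.mem_iInter₂]
    rw [hunf]
    constructor
    · intro h
      have hk : ∀ k, k < j → Δ k ≤ I k ω := by
        intro k hk
        have := h k (Nat.lt_succ_of_lt hk)
        simpa [hg, if_pos hk] using this
      have hjmem := h j (Nat.lt_succ_self j)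
      simp only [hg, lt_irrefl, if_false, Set.mem_inter_iff, Set.mem_Iic] at hjmem
      have hle : I j ω ≤ s - t j := hjmem.1
      have hJeq : J ω = j := by
        rcases lt_trichotomy (J ω) j with hlt | heq | hgt
        · exfalso
          rcases hJ_succ ω with hn' | hstrict
          · omega
          · exact absurd hstrict (not_lt.2 (hk _ hlt))
        · exact heq
        · exfalso
          have hminj := hJ_min ω j hgt
          by_cases hjn : j + 1 = n
          · have := hJ_lt ω; omega
          · have hstrict : I j ω < Δ j := by
              have h2 := hjmem.2
              rw [if_neg hjn] at h2
              exact h2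
            simp only [hΔ] at hstrict
            linarith
      refine ⟨hJeq, ?_⟩
      rw [hT, hJeq]; linarith
    · rintro ⟨hJeq, hTle⟩
      intro k hk'
      rcases Nat.lt_succ_iff_lt_or_eq.1 hk' with hkj | hkj
      · simp only [hg, if_pos hkj]
        exact hJ_min ω k (hJeq ▸ hkj)
      · subst hkj
        simp only [hg, lt_irrefl, if_false, Set.mem_inter_iff, Set.mem_Iic]
        constructor
        · rw [hT, hJeq] at hTle; linarith
        · by_cases hjn : k + 1 = n
          · simp [hjn]
          · rw [if_neg hjn]
            rcases hJ_succ ω with h' | h'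
            · omega
            · rw [hJeq] at h'; exact h'
  -- union and disjointness
  have hUnion : {ω | T ω ≤ s} = ⋃ j ∈ Finset.range n, A j := by
    ext ω
    simp only [mem_setOf_eq, Set.mem_iUnion, Finset.mem_range]
    constructor
    · intro h
      exact ⟨J ω, hJ_lt ω, (hAmem (J ω) (hJ_lt ω) ω).2 ⟨rfl, h⟩⟩
    · rintro ⟨j, hj, hmem⟩
      exact ((hAmem j hj ω).1 hmem).2
  have hdisj : (↑(Finset.range n) : Set ℕ).PairwiseDisjoint A := by
    intro j hj j' hj' hne
    simp only [Finset.coe_range, Set.mem_Iio] at hj hj'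
    refine Set.disjoint_left.2 fun ω h1 h2 => ?_
    have e1 := ((hAmem j hj ω).1 h1).1
    have e2 := ((hAmem j' hj' ω).1 h2).1
    exact hne (e1 ▸ e2 ▸ rfl)
  have hPsum : P {ω | T ω ≤ s} = ∑ j ∈ Finset.range n, P (A j) := by
    rw [hUnion, measure_biUnion_finset hdisj fun j _ => hA_meas j]
  -- probability of I < a equals I ≤ a
  have hlt_le : ∀ k a, P {ω | I k ω < a} = P {ω | I k ω ≤ a} :=
    fun k a => aux_meas_lt_eq_meas_le P (I k) (hI_meas k) (F k) (hF k) (hF_cont k) a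
  -- per-index factor values
  have hfac_lt : ∀ k, (P (I k ⁻¹' Ici (Δ k))).toReal = 1 - F k (Δ k) := by
    intro k
    have hset : I k ⁻¹' Ici (Δ k) = (I k ⁻¹' Iio (Δ k))ᶜ := by
      ext ω; simp [not_lt]
    rw [hset, measure_compl ((measurableSet_Iio (a := Δ k)).preimage (hI_meas k))
      (measure_ne_top _ _), measure_univ]
    have hpe : P (I k ⁻¹' Iio (Δ k)) = P {ω | I k ω ≤ Δ k} := hlt_le k (Δ k)
    rw [hpe, ENNReal.toReal_sub_of_le prob_le_one ENNReal.one_ne_top,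
      ENNReal.toReal_one, hF]
  have hfac_lio : ∀ k a, (P (I k ⁻¹' Iio a)).toReal = F k a := by
    intro k a
    have : I k ⁻¹' Iio a = {ω | I k ω < a} := rfl
    rw [this, hlt_le, hF]
  have hfac_lic : ∀ k a, (P (I k ⁻¹' Iic a)).toReal = F k a := by
    intro k a
    rw [hF]; rfl
  -- measure of A j
  have hPA : ∀ j, j < n → (P (A j)).toReal
      = F j ((if j + 1 = n then s else min s (t (j+1))) - t j)
        * ∏ k ∈ Finset.range j, (1 - F k (Δ k)) := by
    intro j hj
    have hbound : ∀ m ∈ Finset.range (j+1), m < n := by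
      intro m hm; rw [Finset.mem_range] at hm; omega
    have hAset : A j = ⋂ i ∈ (Finset.range (j+1)).attachFin hbound,
        I (i : ℕ) ⁻¹' g j (i : ℕ) := by
      ext ω
      simp only [hA, Set.mem_iInter, Finset.mem_attachFin, Finset.mem_range]
      constructor
      · intro h i hi; exact h i hi
      · intro h k hk; exact h ⟨k, hbound k (Finset.mem_range.2 hk)⟩ hk
    have hPprod : P (A j) = ∏ i ∈ (Finset.range (j+1)).attachFin hbound,
        P (I (i : ℕ) ⁻¹' g j (i : ℕ)) := by
      rw [hAset]
      exact hindep.meas_biInter fun i _ => ⟨g j (i : ℕ), hg_meas j (i : ℕ), rfl⟩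
    rw [hPprod, ENNReal.toReal_prod,
      aux_prod_attachFin (Finset.range (j+1)) hbound (fun k => (P (I k ⁻¹' g j k)).toReal),
      Finset.prod_range_succ]
    have hlast : (P (I j ⁻¹' g j j)).toReal
        = F j ((if j + 1 = n then s else min s (t (j+1))) - t j) := by
      simp only [hg, lt_irrefl, if_false]
      by_cases hjn : j + 1 = n
      · rw [if_pos hjn, Set.inter_univ, if_pos hjn, hfac_lic]
      · rw [if_neg hjn, if_neg hjn]
        rcases le_total (t (j+1)) s with hts | hts
        · have hba : Δ j ≤ s - t j := by simp only [hΔ]; linarith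
          have hset : Iic (s - t j) ∩ Iio (Δ j) = Iio (Δ j) := by
            apply Set.inter_eq_self_of_subset_right
            intro x hx
            simp only [mem_Iio] at hx
            simp only [mem_Iic]
            linarith
          rw [hset, hfac_lio]
          congr 1
          simp only [hΔ]
          rw [min_eq_right hts]
        · have hab : s - t j ≤ Δ j := by simp only [hΔ]; linarith
          have hle1 : P (I j ⁻¹' (Iic (s - t j) ∩ Iio (Δ j)))
              ≤ P (I j ⁻¹' Iic (s - t j)) :=
            measure_mono (Set.preimage_mono Set.inter_subset_left)
          have hle2 : P (I j ⁻¹' Iio (s - t j))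
              ≤ P (I j ⁻¹' (Iic (s - t j) ∩ Iio (Δ j))) := by
            apply measure_mono
            apply Set.preimage_mono
            intro x hx
            simp only [mem_Iio] at hx
            exact ⟨le_of_lt hx, lt_of_lt_of_le hx hab⟩
          have heq : P (I j ⁻¹' Iio (s - t j)) = P (I j ⁻¹' Iic (s - t j)) :=
            hlt_le j (s - t j)
          have : P (I j ⁻¹' (Iic (s - t j) ∩ Iio (Δ j))) = P (I j ⁻¹' Iic (s - t j)) :=
            le_antisymm hle1 (heq ▸ hle2)
          rw [this, hfac_lic]
          congr 1
          rw [min_eq_left hts]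
    have hrest : ∀ k ∈ Finset.range j, (P (I k ⁻¹' g j k)).toReal = 1 - F k (Δ k) := by
      intro k hk
      rw [Finset.mem_range] at hk
      simp only [hg, if_pos hk]
      exact hfac_lt k
    rw [Finset.prod_congr rfl hrest, hlast, mul_comm]
  -- conclude
  rw [hPsum, ENNReal.toReal_sum fun j _ => measure_ne_top _ _]
  exact Finset.sum_congr rfl fun j hj => hPA j (Finset.mem_range.1 hj)
end

section
/- Under the pairwise Cox-type hazard model, fix t ≥ 0, distinct individuals i ≠ j, treatments x_i and x_{(j)} and covariates l of all individuals, and an infection history h_{(i,j)} for the individuals other than i and j. Let h'_j be the history in which j is infected at a time t'_j < t and h_j the history in which j remains uninfected through time t. If γ(t − t'_j) > 0, then [λ_i(t | x_j = 1, x_{(j)}, h'_j, h_{(i,j)}, l) − λ_i(t | x_j = 1, x_{(j)}, h_j, h_{(i,j)}, l)] / [λ_i(t | x_j = 0, x_{(j)}, h'_j, h_{(i,j)}, l) − λ_i(t | x_j = 0, x_{(j)}, h_j, h_{(i,j)}, l)] = exp(β₂); that is, the controlled infectiousness hazard ratio equals exp(β₂), regardless of t, the treatments of individuals other than j, the infection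 history of individuals other than j, and the cluster size. -/
open MeasureTheory ENNReal

/-- Pairwise Cox-type infection hazard for individual `i` at time `t`:
`λ_i(t | x, h, l) = exp(β₁ x_i + θ₁ l_i) ·
  (α(t) + Σ_{j≠i} 1{t > t_j} γ(t - t_j) exp(β₂ x_j + θ₂ l_j))`,
where the infection history assigns infection time `τ j ∈ (0,∞]` to individual `j`. -/
noncomputable def clusterHazard (n : ℕ) (β₁ β₂ θ₁ θ₂ : ℝ) (α γ : ℝ → ℝ)
    (x l : Fin n → ℝ) (τ : Fin n → ℝ≥0∞) (i : Fin n) (t : ℝ) : ℝ :=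
  Real.exp (β₁ * x i + θ₁ * l i) *
    (α t + ∑ j ∈ Finset.univ.erase i,
      if τ j < ENNReal.ofReal t then γ (t - (τ j).toReal) * Real.exp (β₂ * x j + θ₂ * l j)
      else 0)

/-- Controlled infectiousness hazard ratio: the increment in `i`'s hazard caused by
`j`'s infection at time `t'_j < t` (relative to `j` uninfected), with `j` treated,
divided by the same increment with `j` untreated, equals `exp(β₂)`, regardless of `t`,
the treatments of individuals other than `j`, the infection history of individuals
other than `j`, and the cluster size. -/
theorem controlled_infectiousness_hazard_ratio
    (n : ℕ) (β₁ β₂ θ₁ θ₂ : ℝ) (α γ : ℝ → ℝ)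
    (x l : Fin n → ℝ) (τ : Fin n → ℝ≥0∞)
    (hτ_pos : ∀ k, 0 < τ k)
    (i j : Fin n) (hij : i ≠ j)
    (t t'j : ℝ) (ht'j_pos : 0 < t'j) (ht'j_lt : t'j < t)
    (hγ_pos : 0 < γ (t - t'j)) :
    (clusterHazard n β₁ β₂ θ₁ θ₂ α γ (Function.update x j 1) l
        (Function.update τ j (ENNReal.ofReal t'j)) i t
      - clusterHazard n β₁ β₂ θ₁ θ₂ α γ (Function.update x j 1) l
        (Function.update τ j ⊤) i t) /
    (clusterHazard n β₁ β₂ θ₁ θ₂ α γ (Function.update x j 0) l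
        (Function.update τ j (ENNReal.ofReal t'j)) i t
      - clusterHazard n β₁ β₂ θ₁ θ₂ α γ (Function.update x j 0) l
        (Function.update τ j ⊤) i t)
      = Real.exp β₂ := by

  have hji : j ≠ i := Ne.symm hij
  have hmem : j ∈ Finset.univ.erase i := Finset.mem_erase.2 ⟨hji, Finset.mem_univ j⟩
  set E := Real.exp (β₁ * x i + θ₁ * l i) with hE
  set R := ∑ k ∈ (Finset.univ.erase i).erase j,
      (if τ k < ENNReal.ofReal t then γ (t - (τ k).toReal) * Real.exp (β₂ * x k + θ₂ * l k)
       else 0) with hR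
  have key : ∀ (u : ℝ) (v : ℝ≥0∞),
      clusterHazard n β₁ β₂ θ₁ θ₂ α γ (Function.update x j u) l (Function.update τ j v) i t
      = E * (α t + ((if v < ENNReal.ofReal t then γ (t - v.toReal) * Real.exp (β₂ * u + θ₂ * l j)
          else 0) + R)) := by
    intro u v
    unfold clusterHazard
    rw [Function.update_of_ne hij, ← Finset.add_sum_erase _ _ hmem,
      Function.update_self, Function.update_self]
    congr 2
    congr 1
    rw [hR]
    apply Finset.sum_congr rfl
    intro k hk
    have hkj : k ≠ j := (Finset.mem_erase.1 hk).1
    rw [Function.update_of_ne hkj, Function.update_of_ne hkj]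
  have htpos : (0:ℝ) < t := ht'j_pos.trans ht'j_lt
  have hlt : ENNReal.ofReal t'j < ENNReal.ofReal t :=
    (ENNReal.ofReal_lt_ofReal_iff htpos).2 ht'j_lt
  have hnt : ¬ ((⊤ : ℝ≥0∞) < ENNReal.ofReal t) := not_top_lt
  have htr : (ENNReal.ofReal t'j).toReal = t'j := ENNReal.toReal_ofReal ht'j_pos.le
  rw [key, key, key, key]
  simp only [hlt, hnt, if_pos, if_neg, htr, if_true, if_false]
  have h1 : E * (α t + (γ (t - t'j) * Real.exp (β₂ * 1 + θ₂ * l j) + R)) - E * (α t + (0 + R))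
      = E * γ (t - t'j) * Real.exp (β₂ * 1 + θ₂ * l j) := by ring
  have h0 : E * (α t + (γ (t - t'j) * Real.exp (β₂ * 0 + θ₂ * l j) + R)) - E * (α t + (0 + R))
      = E * γ (t - t'j) * Real.exp (β₂ * 0 + θ₂ * l j) := by ring
  rw [h1, h0]
  rw [mul_div_mul_left _ _ (by positivity : E * γ (t - t'j) ≠ 0)]
  rw [← Real.exp_sub]
  ring_nf
end

section
/- Under the pairwise Cox-type hazard model with all treatments set to zero (x = 0), fix distinct individuals i ≠ j, covariates l, an infection history h_{(i,j)} for the individuals other than i and j, and times 0 < t'_j < t''_j < t. Let h'_j, h''_j, and h_j be the histories in which j is infected at time t'_j, infected at time t''_j, and uninfected through time t, respectively. If ∫₀^{t − t''_j} γ(u) du ≠ 0, then [∫₀ᵗ (λ_i(u | 0, h'_j, h_{(i,j)}, l) − λ_i(u | 0, h_j, h_{(i,j)}, l)) du] / [∫₀ᵗ (λ_i(u | 0, h''_j, h_{(i,j)}, l) − λ_i(u | 0, h_j, h_{(i,j)}, l)) du] = (∫₀^{t − t'_j} γ(u) du) / (∫₀^{t − t''_j} γ(u) du). In particular, if γ(s)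 > 0 for all s > 0, this controlled contagion cumulative hazard ratio exceeds 1, so earlier exposure to infection increases cumulative infection risk. -/
open MeasureTheory ENNReal

lemma hazard_diff (n : ℕ) (β₁ β₂ θ₁ θ₂ : ℝ) (α γ : ℝ → ℝ)
    (l : Fin n → ℝ) (τ : Fin n → ℝ≥0∞) (i j : Fin n) (hij : i ≠ j)
    (s : ℝ) (hs : 0 < s) (u : ℝ) :
    clusterHazard n β₁ β₂ θ₁ θ₂ α γ (fun _ => 0) l
        (Function.update τ j (ENNReal.ofReal s)) i u
      - clusterHazard n β₁ β₂ θ₁ θ₂ α γ (fun _ => 0) l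
        (Function.update τ j ⊤) i u
    = (Real.exp (θ₁ * l i) * Real.exp (θ₂ * l j)) * (if s < u then γ (u - s) else 0) := by
  unfold clusterHazard
  have hj : j ∈ Finset.univ.erase i := Finset.mem_erase.2 ⟨hij.symm, Finset.mem_univ j⟩
  rw [← Finset.add_sum_erase _ _ hj, ← Finset.add_sum_erase _ _ hj]
  have hS : ∀ S : ℝ≥0∞, ∑ k ∈ (Finset.univ.erase i).erase j,
      (if Function.update τ j S k < ENNReal.ofReal u then
        γ (u - (Function.update τ j S k).toReal) * Real.exp (β₂ * (fun _ => (0:ℝ)) k + θ₂ * l k)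
      else 0)
      = ∑ k ∈ (Finset.univ.erase i).erase j,
      (if τ k < ENNReal.ofReal u then
        γ (u - (τ k).toReal) * Real.exp (β₂ * (fun _ => (0:ℝ)) k + θ₂ * l k) else 0) := by
    intro S
    refine Finset.sum_congr rfl fun k hk => ?_
    have hkj : k ≠ j := (Finset.mem_erase.1 hk).1
    rw [Function.update_of_ne hkj]
  rw [hS, hS]
  simp only [Function.update_self, not_top_lt, if_false,
    ENNReal.ofReal_lt_ofReal_iff_of_nonneg hs.le, ENNReal.toReal_ofReal hs.le,
    mul_zero, zero_add, add_zero]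
  by_cases h : s < u <;> simp [h] <;> try ring

lemma ite_intInteg (γ : ℝ → ℝ)
    (hγ_int : ∀ c : ℝ, 0 ≤ c → IntervalIntegrable γ volume 0 c)
    (s t : ℝ) (hs : 0 < s) (hst : s < t) :
    IntervalIntegrable (fun u => if s < u then γ (u - s) else 0) volume s t ∧
    IntervalIntegrable (fun u => if s < u then γ (u - s) else 0) volume 0 s := by
  constructor
  · have h1 : IntervalIntegrable (fun u => γ (u - s)) volume s t := by
      have := (hγ_int (t - s) (by linarith)).comp_sub_right s
      simpa using this
    refine h1.congr ?_
    exact (fun u hu => by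
      rw [Set.uIoc_of_le hst.le] at hu; simp [hu.1])
  · have h0 : IntervalIntegrable (fun _ : ℝ => (0:ℝ)) volume 0 s := intervalIntegrable_const
    refine h0.congr ?_
    exact (fun u hu => by
      rw [Set.uIoc_of_le hs.le] at hu; simp [not_lt.2 hu.2])

lemma ite_integral (γ : ℝ → ℝ)
    (hγ_int : ∀ c : ℝ, 0 ≤ c → IntervalIntegrable γ volume 0 c)
    (s t : ℝ) (hs : 0 < s) (hst : s < t) :
    (∫ u in (0:ℝ)..t, (if s < u then γ (u - s) else 0))
      = ∫ u in (0:ℝ)..(t - s), γ u := by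
  obtain ⟨h1, h2⟩ := ite_intInteg γ hγ_int s t hs hst
  rw [← intervalIntegral.integral_add_adjacent_intervals h2 h1]
  have e2 : (∫ u in (0:ℝ)..s, (if s < u then γ (u - s) else 0)) = 0 := by
    rw [intervalIntegral.integral_congr (g := fun _ => (0:ℝ)) ?_, intervalIntegral.integral_const,
      smul_zero]
    intro u hu
    rw [Set.uIcc_of_le hs.le] at hu
    simp [not_lt.2 hu.2]
  have e1 : (∫ u in s..t, (if s < u then γ (u - s) else 0)) = ∫ u in s..t, γ (u - s) := by
    refine intervalIntegral.integral_congr_ae (Filter.Eventually.of_forall fun u hu => ?_)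
    rw [Set.uIoc_of_le hst.le] at hu
    simp [hu.1]
  rw [e2, e1, zero_add, intervalIntegral.integral_comp_sub_right γ s, sub_self]

/-- Controlled contagion cumulative hazard ratio: with all treatments zero, contrasting
infection of `j` at the earlier time `t'_j` versus the later time `t''_j` (each against
`j` uninfected), the ratio of cumulative hazard increments up to `t` equals
`(∫₀^{t-t'_j} γ)/(∫₀^{t-t''_j} γ)`; in particular it exceeds `1` when `γ > 0` on
`(0,∞)`, so earlier exposure to infection increases cumulative infection risk. -/
theorem controlled_contagion_cumulative_hazard_ratio
    (n : ℕ) (β₁ β₂ θ₁ θ₂ : ℝ) (α γ : ℝ → ℝ)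
    (hγ_int : ∀ c : ℝ, 0 ≤ c → IntervalIntegrable γ volume 0 c)
    (l : Fin n → ℝ) (τ : Fin n → ℝ≥0∞)
    (hτ_pos : ∀ k, 0 < τ k)
    (i j : Fin n) (hij : i ≠ j)
    (t t'j t''j : ℝ) (ht'j_pos : 0 < t'j) (h'lt'' : t'j < t''j) (h''lt : t''j < t)
    (hden : (∫ u in (0:ℝ)..(t - t''j), γ u) ≠ 0) :
    (∫ u in (0:ℝ)..t,
        (clusterHazard n β₁ β₂ θ₁ θ₂ α γ (fun _ => 0) l
            (Function.update τ j (ENNReal.ofReal t'j)) i u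
          - clusterHazard n β₁ β₂ θ₁ θ₂ α γ (fun _ => 0) l
            (Function.update τ j ⊤) i u)) /
    (∫ u in (0:ℝ)..t,
        (clusterHazard n β₁ β₂ θ₁ θ₂ α γ (fun _ => 0) l
            (Function.update τ j (ENNReal.ofReal t''j)) i u
          - clusterHazard n β₁ β₂ θ₁ θ₂ α γ (fun _ => 0) l
            (Function.update τ j ⊤) i u))
      = (∫ u in (0:ℝ)..(t - t'j), γ u) / (∫ u in (0:ℝ)..(t - t''j), γ u) ∧
    ((∀ s : ℝ, 0 < s → 0 < γ s) →
      1 < (∫ u in (0:ℝ)..t,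
        (clusterHazard n β₁ β₂ θ₁ θ₂ α γ (fun _ => 0) l
            (Function.update τ j (ENNReal.ofReal t'j)) i u
          - clusterHazard n β₁ β₂ θ₁ θ₂ α γ (fun _ => 0) l
            (Function.update τ j ⊤) i u)) /
      (∫ u in (0:ℝ)..t,
        (clusterHazard n β₁ β₂ θ₁ θ₂ α γ (fun _ => 0) l
            (Function.update τ j (ENNReal.ofReal t''j)) i u
          - clusterHazard n β₁ β₂ θ₁ θ₂ α γ (fun _ => 0) l
            (Function.update τ j ⊤) i u))) := by
  set C : ℝ := Real.exp (θ₁ * l i) * Real.exp (θ₂ * l j) with hC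
  have hCpos : 0 < C := mul_pos (Real.exp_pos _) (Real.exp_pos _)
  have key : ∀ s : ℝ, 0 < s → s < t →
      (∫ u in (0:ℝ)..t,
        (clusterHazard n β₁ β₂ θ₁ θ₂ α γ (fun _ => 0) l
            (Function.update τ j (ENNReal.ofReal s)) i u
          - clusterHazard n β₁ β₂ θ₁ θ₂ α γ (fun _ => 0) l
            (Function.update τ j ⊤) i u))
      = C * ∫ u in (0:ℝ)..(t - s), γ u := by
    intro s hs hst
    rw [show (∫ u in (0:ℝ)..t,
        (clusterHazard n β₁ β₂ θ₁ θ₂ α γ (fun _ => 0) l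
            (Function.update τ j (ENNReal.ofReal s)) i u
          - clusterHazard n β₁ β₂ θ₁ θ₂ α γ (fun _ => 0) l
            (Function.update τ j ⊤) i u))
        = ∫ u in (0:ℝ)..t, C * (if s < u then γ (u - s) else 0) from
      intervalIntegral.integral_congr fun u _ => hazard_diff n β₁ β₂ θ₁ θ₂ α γ l τ i j hij s hs u]
    rw [intervalIntegral.integral_const_mul, ite_integral γ hγ_int s t hs hst]
  have ht'lt : t'j < t := lt_trans h'lt'' h''lt
  rw [key t'j ht'j_pos ht'lt, key t''j (lt_trans ht'j_pos h'lt'') h''lt]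
  set A : ℝ := ∫ u in (0:ℝ)..(t - t'j), γ u
  set B : ℝ := ∫ u in (0:ℝ)..(t - t''j), γ u
  have hratio : (C * A) / (C * B) = A / B := mul_div_mul_left A B (ne_of_gt hCpos)
  refine ⟨hratio, fun hpos => ?_⟩
  rw [hratio]
  have hB1 : IntervalIntegrable γ volume 0 (t - t''j) := hγ_int _ (by linarith)
  have hA1 : IntervalIntegrable γ volume 0 (t - t'j) := hγ_int _ (by linarith)
  have hBpos : 0 < B := intervalIntegral.intervalIntegral_pos_of_pos_on hB1
    (fun x hx => hpos x hx.1) (by linarith)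
  have hmid : IntervalIntegrable γ volume (t - t''j) (t - t'j) := hB1.symm.trans hA1
  have hmidpos : 0 < ∫ u in (t - t''j)..(t - t'j), γ u :=
    intervalIntegral.intervalIntegral_pos_of_pos_on hmid
      (fun x hx => hpos x (by have := hx.1; linarith)) (by linarith)
  have hAB : A = B + ∫ u in (t - t''j)..(t - t'j), γ u := by
    rw [intervalIntegral.integral_add_adjacent_intervals hB1 hmid]
  have : B < A := by rw [hAB]; linarith
  exact (one_lt_div hBpos).2 this
end

section
/- Under the pairwise Cox-type hazard model with all treatments set to zero (x = 0), with exposure-controlled expected potential infection outcome E[Y_i(t; x, h)] = 1 − exp(−∫₀ᵗ λ_i(s | x, h, l) ds), suppose α and γ are locally integrable and γ(s) > 0 for all s > 0. Let h and h' be infection histories with infection times (t_j)_{j≠i} and (t'_j)_{j≠i} satisfying t_j ≤ t'_j for every j ≠ i, and suppose there exists some j ≠ i with t_j < t'_j and t_j < t. Then the exposure-controlled contagion effect is positive: E[Y_i(t; 0, h)] − E[Y_i(t; 0, h')] > 0. -/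
open MeasureTheory ENNReal

/-- Exposure-controlled expected potential infection outcome
`E[Y_i(t; x, h)] = 1 - exp(-∫₀ᵗ λ_i(s | x, h, l) ds)`. -/
noncomputable def expectedOutcome (n : ℕ) (β₁ β₂ θ₁ θ₂ : ℝ) (α γ : ℝ → ℝ)
    (x l : Fin n → ℝ) (τ : Fin n → ℝ≥0∞) (i : Fin n) (t : ℝ) : ℝ :=
  1 - Real.exp (-∫ s in (0:ℝ)..t, clusterHazard n β₁ β₂ θ₁ θ₂ α γ x l τ i s)

section Aux

variable {γ : ℝ → ℝ}

lemma gammaAux_intble (hγ_int : ∀ c : ℝ, 0 ≤ c → IntervalIntegrable γ volume 0 c)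
    {b1 b2 : ℝ} (h1 : 0 ≤ b1) (h12 : b1 ≤ b2) : IntervalIntegrable γ volume b1 b2 := by
  refine (hγ_int b2 (h1.trans h12)).mono_set ?_
  rw [Set.uIcc_of_le (h1.trans h12), Set.uIcc_of_le h12]
  exact Set.Icc_subset_Icc h1 le_rfl

lemma gammaAux_nonneg (hγ_pos : ∀ s : ℝ, 0 < s → 0 < γ s)
    {b1 b2 : ℝ} (h1 : 0 ≤ b1) (h12 : b1 ≤ b2) :
    0 ≤ ∫ u in b1..b2, γ u := by
  rw [intervalIntegral.integral_of_le h12]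
  refine setIntegral_nonneg measurableSet_Ioc fun u hu => ?_
  exact (hγ_pos u (lt_of_le_of_lt h1 hu.1)).le

lemma gammaAux_mono (hγ_pos : ∀ s : ℝ, 0 < s → 0 < γ s)
    (hγ_int : ∀ c : ℝ, 0 ≤ c → IntervalIntegrable γ volume 0 c)
    {b1 b2 : ℝ} (h1 : 0 ≤ b1) (h12 : b1 ≤ b2) :
    ∫ u in (0:ℝ)..b1, γ u ≤ ∫ u in (0:ℝ)..b2, γ u := by
  have hadd := intervalIntegral.integral_add_adjacent_intervals
    (gammaAux_intble hγ_int le_rfl h1) (gammaAux_intble hγ_int h1 h12)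
  have := gammaAux_nonneg hγ_pos h1 h12
  linarith

lemma gammaAux_strict (hγ_pos : ∀ s : ℝ, 0 < s → 0 < γ s)
    (hγ_int : ∀ c : ℝ, 0 ≤ c → IntervalIntegrable γ volume 0 c)
    {b1 b2 : ℝ} (h1 : 0 ≤ b1) (h12 : b1 < b2) :
    ∫ u in (0:ℝ)..b1, γ u < ∫ u in (0:ℝ)..b2, γ u := by
  have hadd := intervalIntegral.integral_add_adjacent_intervals
    (gammaAux_intble hγ_int le_rfl h1) (gammaAux_intble hγ_int h1 h12.le)
  have hpos : 0 < ∫ u in b1..b2, γ u := by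
    refine intervalIntegral.intervalIntegral_pos_of_pos_on
      (gammaAux_intble hγ_int h1 h12.le) (fun x hx => hγ_pos x (lt_of_le_of_lt h1 hx.1)) h12
  linarith

/-- Integrability of the shifted-indicator contagion kernel. -/
lemma indAux_intble (hγ_int : ∀ c : ℝ, 0 ≤ c → IntervalIntegrable γ volume 0 c)
    {a t : ℝ} (ha : 0 ≤ a) (ht : 0 ≤ t) :
    IntervalIntegrable (fun s => if a < s then γ (s - a) else 0) volume 0 t := by
  rcases le_or_gt t a with h | h
  · rw [intervalIntegrable_iff_integrableOn_Ioc_of_le ht]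
    refine (integrableOn_zero).congr_fun ?_ measurableSet_Ioc
    intro s hs
    simp [not_lt.mpr (hs.2.trans h)]
  · have h1 : IntervalIntegrable (fun s => if a < s then γ (s - a) else 0) volume 0 a := by
      rw [intervalIntegrable_iff_integrableOn_Ioc_of_le ha]
      refine (integrableOn_zero).congr_fun ?_ measurableSet_Ioc
      intro s hs
      simp [not_lt.mpr hs.2]
    have h2 : IntervalIntegrable (fun s => if a < s then γ (s - a) else 0) volume a t := by
      have base := (hγ_int (t - a) (by linarith)).comp_sub_right a
      simp only [zero_add, sub_add_cancel] at base
      rw [intervalIntegrable_iff_integrableOn_Ioc_of_le h.le]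
      rw [intervalIntegrable_iff_integrableOn_Ioc_of_le h.le] at base
      refine base.congr_fun ?_ measurableSet_Ioc
      intro s hs
      simp [hs.1]
    exact h1.trans h2

/-- Value of the integral of the shifted-indicator contagion kernel. -/
lemma indAux_val (hγ_int : ∀ c : ℝ, 0 ≤ c → IntervalIntegrable γ volume 0 c)
    {a t : ℝ} (ha : 0 ≤ a) (ht : 0 ≤ t) :
    ∫ s in (0:ℝ)..t, (if a < s then γ (s - a) else 0)
      = ∫ u in (0:ℝ)..(max (t - a) 0), γ u := by
  rcases le_or_gt t a with h | h
  · rw [max_eq_right (by linarith), intervalIntegral.integral_same]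
    rw [intervalIntegral.integral_congr (g := fun _ => (0:ℝ)) ?_, intervalIntegral.integral_zero]
    intro s hs
    rw [Set.uIcc_of_le ht] at hs
    simp [not_lt.mpr (hs.2.trans h)]
  · have h1 : IntervalIntegrable (fun s => if a < s then γ (s - a) else 0) volume 0 a := by
      rw [intervalIntegrable_iff_integrableOn_Ioc_of_le ha]
      refine (integrableOn_zero).congr_fun ?_ measurableSet_Ioc
      intro s hs
      simp [not_lt.mpr hs.2]
    have h2 : IntervalIntegrable (fun s => if a < s then γ (s - a) else 0) volume a t := by
      have base := (hγ_int (t - a) (by linarith)).comp_sub_right a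
      simp only [zero_add, sub_add_cancel] at base
      rw [intervalIntegrable_iff_integrableOn_Ioc_of_le h.le]
      rw [intervalIntegrable_iff_integrableOn_Ioc_of_le h.le] at base
      refine base.congr_fun ?_ measurableSet_Ioc
      intro s hs
      simp [hs.1]
    rw [← intervalIntegral.integral_add_adjacent_intervals h1 h2]
    have e1 : ∫ s in (0:ℝ)..a, (if a < s then γ (s - a) else 0) = 0 := by
      rw [intervalIntegral.integral_congr (g := fun _ => (0:ℝ)) ?_, intervalIntegral.integral_zero]
      intro s hs
      rw [Set.uIcc_of_le ha] at hs
      simp [not_lt.mpr hs.2]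
    have e2 : ∫ s in a..t, (if a < s then γ (s - a) else 0) = ∫ s in a..t, γ (s - a) := by
      refine intervalIntegral.integral_congr_ae (Filter.Eventually.of_forall fun s hs => ?_)
      rw [Set.uIoc_of_le h.le] at hs
      simp [hs.1]
    rw [e1, e2, zero_add, intervalIntegral.integral_comp_sub_right γ a, sub_self,
      max_eq_left (by linarith)]

end Aux

/-- Positive exposure-controlled contagion effect (Corollary 4): with all treatments
zero and `γ > 0` on `(0,∞)`, if the history `h` has everywhere earlier-or-equal
infection times than `h'`, strictly earlier for some `j ≠ i` infected before `t`,
then `E[Y_i(t; 0, h)] - E[Y_i(t; 0, h')] > 0`. -/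
theorem exposure_controlled_contagion_effect_pos
    (n : ℕ) (β₁ β₂ θ₁ θ₂ : ℝ) (α γ : ℝ → ℝ)
    (hα_nonneg : ∀ s, 0 ≤ s → 0 ≤ α s)
    (hα_int : ∀ c : ℝ, 0 ≤ c → IntervalIntegrable α volume 0 c)
    (hγ_pos : ∀ s : ℝ, 0 < s → 0 < γ s)
    (hγ_int : ∀ c : ℝ, 0 ≤ c → IntervalIntegrable γ volume 0 c)
    (l : Fin n → ℝ) (i : Fin n) (t : ℝ) (ht : 0 ≤ t)
    (τ τ' : Fin n → ℝ≥0∞)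
    (hτ_pos : ∀ k, 0 < τ k) (hτ'_pos : ∀ k, 0 < τ' k)
    (hle : ∀ j, j ≠ i → τ j ≤ τ' j)
    (hstrict : ∃ j, j ≠ i ∧ τ j < τ' j ∧ τ j < ENNReal.ofReal t) :
    0 < expectedOutcome n β₁ β₂ θ₁ θ₂ α γ (fun _ => 0) l τ i t
      - expectedOutcome n β₁ β₂ θ₁ θ₂ α γ (fun _ => 0) l τ' i t := by
  classical
  -- real-valued (capped) infection times
  set A : (Fin n → ℝ≥0∞) → Fin n → ℝ :=
    fun σ j => if σ j = ⊤ then t + 1 else (σ j).toReal with hA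
  have hA_nonneg : ∀ σ j, 0 ≤ A σ j := by
    intro σ j
    by_cases h : σ j = ⊤ <;> simp [hA, h, ENNReal.toReal_nonneg] <;> linarith
  -- the hazard rewritten with real infection times, valid on [0, t]
  have hhaz : ∀ σ : Fin n → ℝ≥0∞, ∀ s ∈ Set.uIcc (0:ℝ) t,
      clusterHazard n β₁ β₂ θ₁ θ₂ α γ (fun _ => 0) l σ i s
        = Real.exp (β₁ * 0 + θ₁ * l i) *
          (α s + ∑ j ∈ Finset.univ.erase i,
            (if A σ j < s then γ (s - A σ j) else 0) * Real.exp (β₂ * 0 + θ₂ * l j)) := by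
    intro σ s hs
    rw [Set.uIcc_of_le ht] at hs
    unfold clusterHazard
    congr 2
    refine Finset.sum_congr rfl fun j _ => ?_
    by_cases hj : σ j = ⊤
    · have h1 : ¬ σ j < ENNReal.ofReal s := by simp [hj]
      have h2 : ¬ A σ j < s := by
        simp only [hA, hj, if_pos]
        linarith [hs.2]
      simp [h1, h2]
    · have hiff : σ j < ENNReal.ofReal s ↔ A σ j < s := by
        rw [hA]
        simp only [hj, if_neg, if_false]
        exact ENNReal.lt_ofReal_iff_toReal_lt hj
      by_cases hc : σ j < ENNReal.ofReal s
      · rw [if_pos hc, if_pos (hiff.mp hc)]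
        simp [hA, hj]
      · rw [if_neg hc, if_neg (fun h => hc (hiff.mpr h)), zero_mul]
  -- value of the integrated hazard
  have hval : ∀ σ : Fin n → ℝ≥0∞,
      (∫ s in (0:ℝ)..t, clusterHazard n β₁ β₂ θ₁ θ₂ α γ (fun _ => 0) l σ i s)
        = Real.exp (β₁ * 0 + θ₁ * l i) *
          ((∫ s in (0:ℝ)..t, α s) + ∑ j ∈ Finset.univ.erase i,
            (∫ u in (0:ℝ)..(max (t - A σ j) 0), γ u) * Real.exp (β₂ * 0 + θ₂ * l j)) := by
    intro σ
    rw [intervalIntegral.integral_congr (hhaz σ)]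
    rw [intervalIntegral.integral_const_mul]
    congr 1
    have hintj : ∀ j ∈ Finset.univ.erase i, IntervalIntegrable
        (fun s => (if A σ j < s then γ (s - A σ j) else 0) * Real.exp (β₂ * 0 + θ₂ * l j))
        volume 0 t :=
      fun j _ => (indAux_intble hγ_int (hA_nonneg σ j) ht).mul_const _
    have hsum : IntervalIntegrable (fun s => ∑ j ∈ Finset.univ.erase i,
        (if A σ j < s then γ (s - A σ j) else 0) * Real.exp (β₂ * 0 + θ₂ * l j)) volume 0 t := by
      have := IntervalIntegrable.sum (ε := ℝ) (Finset.univ.erase i) hintj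
      convert this using 1
      · rfl
      ext s
      simp
    rw [intervalIntegral.integral_add (hα_int t ht) hsum]
    congr 1
    rw [intervalIntegral.integral_finset_sum hintj]
    refine Finset.sum_congr rfl fun j _ => ?_
    rw [intervalIntegral.integral_mul_const, indAux_val hγ_int (hA_nonneg σ j) ht]
  -- termwise comparison of the contagion contributions
  have hmax : ∀ j, j ≠ i → max (t - A τ' j) 0 ≤ max (t - A τ j) 0 := by
    intro j hj
    by_cases h' : τ' j = ⊤
    · calc max (t - A τ' j) 0 = 0 := by
            simp only [hA, h', if_pos]
            exact max_eq_right (by linarith)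
        _ ≤ max (t - A τ j) 0 := le_max_right _ _
    · have hτj : τ j ≠ ⊤ := fun h => h' (top_le_iff.mp (h ▸ hle j hj))
      have : A τ j ≤ A τ' j := by
        simp only [hA, hτj, h', if_neg, if_false]
        exact ENNReal.toReal_mono h' (hle j hj)
      exact max_le_max (by linarith) le_rfl
  have hmax_strict : ∃ j ∈ Finset.univ.erase i,
      max (t - A τ' j) 0 < max (t - A τ j) 0 := by
    obtain ⟨j, hj, hlt, hjt⟩ := hstrict
    refine ⟨j, Finset.mem_erase.mpr ⟨hj, Finset.mem_univ j⟩, ?_⟩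
    have hτj : τ j ≠ ⊤ := hjt.ne_top
    have hAj : A τ j < t := by
      simp only [hA, hτj, if_neg, if_false]
      exact (ENNReal.lt_ofReal_iff_toReal_lt hτj).mp hjt
    have hb2 : max (t - A τ j) 0 = t - A τ j := max_eq_left (by linarith)
    rw [hb2]
    by_cases h' : τ' j = ⊤
    · have : max (t - A τ' j) 0 = 0 := by
        simp only [hA, h', if_pos]
        exact max_eq_right (by linarith)
      rw [this]; linarith
    · have hAA : A τ j < A τ' j := by
        simp only [hA, hτj, h', if_neg, if_false]
        exact (ENNReal.toReal_lt_toReal hτj h').mpr hlt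
      exact max_lt (by linarith) (by linarith)
  -- compare the two integrated hazards
  have hIlt : (∫ s in (0:ℝ)..t, clusterHazard n β₁ β₂ θ₁ θ₂ α γ (fun _ => 0) l τ' i s)
      < ∫ s in (0:ℝ)..t, clusterHazard n β₁ β₂ θ₁ θ₂ α γ (fun _ => 0) l τ i s := by
    rw [hval τ, hval τ']
    refine mul_lt_mul_of_pos_left ?_ (Real.exp_pos _)
    refine add_lt_add_right ?_ _
    refine Finset.sum_lt_sum (fun j hj => ?_) ?_
    · refine mul_le_mul_of_nonneg_right ?_ (Real.exp_pos _).le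
      exact gammaAux_mono hγ_pos hγ_int (le_max_right _ _)
        (hmax j (Finset.mem_erase.mp hj).1)
    · obtain ⟨j, hj, hlt⟩ := hmax_strict
      refine ⟨j, hj, mul_lt_mul_of_pos_right ?_ (Real.exp_pos _)⟩
      exact gammaAux_strict hγ_pos hγ_int (le_max_right _ _) hlt
  -- conclude
  unfold expectedOutcome
  have := Real.exp_lt_exp.mpr (neg_lt_neg hIlt)
  linarith
end

section
/- Under the pairwise Cox-type hazard model, with exposure-controlled expected potential infection outcome E[Y_i(t; x, h)] = 1 − exp(−∫₀ᵗ λ_i(s | x, h, l) ds), fix t > 0, treatments x_{(i)} of individuals other than i, an infection history h with times (t_j)_{j≠i}, and covariates l, and set A = ∫₀ᵗ exp(θ₁l_i)·(α(s) + Σ_{j≠i} y_j(s)·γ(s − t_j)·exp(β₂x_j + θ₂l_j)) ds. If 0 < A < ∞, then the exposure-controlled susceptibility effect SE_i(t, x_{(i)}, h) = E[Y_i(t; x_i = 1, x_{(i)}, h)] − E[Y_i(t; x_i = 0, x_{(i)}, h)] satisfies: SE_i < 0 if β₁ < 0, SE_i = 0 if β₁ = 0, and SE_i > 0 if β₁ >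 0. That is, the exposure-controlled susceptibility effect has the same sign as β₁. -/
open MeasureTheory ENNReal

/-- Sign of the exposure-controlled susceptibility effect (Corollary 5): with
`A = ∫₀ᵗ exp(θ₁ l_i)(α(s) + Σ_{j≠i} y_j(s) γ(s - t_j) exp(β₂ x_j + θ₂ l_j)) ds`
finite and positive, the effect
`SE_i = E[Y_i(t; x_i = 1, x_{(i)}, h)] - E[Y_i(t; x_i = 0, x_{(i)}, h)]`
is negative, zero, or positive according to the sign of `β₁`. -/
theorem exposure_controlled_susceptibility_effect_sign
    (n : ℕ) (β₁ β₂ θ₁ θ₂ : ℝ) (α γ : ℝ → ℝ)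
    (x l : Fin n → ℝ) (τ : Fin n → ℝ≥0∞)
    (hτ_pos : ∀ k, 0 < τ k)
    (i : Fin n) (t : ℝ) (ht : 0 < t)
    (hA_int : IntervalIntegrable
      (fun s => clusterHazard n β₁ β₂ θ₁ θ₂ α γ (Function.update x i 0) l τ i s)
      volume 0 t)
    (hA_pos : 0 < ∫ s in (0:ℝ)..t,
      clusterHazard n β₁ β₂ θ₁ θ₂ α γ (Function.update x i 0) l τ i s) :
    (β₁ < 0 →
      expectedOutcome n β₁ β₂ θ₁ θ₂ α γ (Function.update x i 1) l τ i t
        - expectedOutcome n β₁ β₂ θ₁ θ₂ α γ (Function.update x i 0) l τ i t < 0) ∧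
    (β₁ = 0 →
      expectedOutcome n β₁ β₂ θ₁ θ₂ α γ (Function.update x i 1) l τ i t
        - expectedOutcome n β₁ β₂ θ₁ θ₂ α γ (Function.update x i 0) l τ i t = 0) ∧
    (0 < β₁ →
      0 < expectedOutcome n β₁ β₂ θ₁ θ₂ α γ (Function.update x i 1) l τ i t
        - expectedOutcome n β₁ β₂ θ₁ θ₂ α γ (Function.update x i 0) l τ i t) := by
  have hfac : ∀ s : ℝ, clusterHazard n β₁ β₂ θ₁ θ₂ α γ (Function.update x i 1) l τ i s
      = Real.exp β₁ * clusterHazard n β₁ β₂ θ₁ θ₂ α γ (Function.update x i 0) l τ i s := by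
    intro s
    unfold clusterHazard
    have hsum : ∀ j ∈ Finset.univ.erase i,
        (if τ j < ENNReal.ofReal s then
          γ (s - (τ j).toReal) * Real.exp (β₂ * Function.update x i 1 j + θ₂ * l j) else 0)
        = (if τ j < ENNReal.ofReal s then
          γ (s - (τ j).toReal) * Real.exp (β₂ * Function.update x i 0 j + θ₂ * l j) else 0) := by
      intro j hj
      rw [Function.update_of_ne (Finset.ne_of_mem_erase hj),
        Function.update_of_ne (Finset.ne_of_mem_erase hj)]
    rw [Finset.sum_congr rfl hsum, Function.update_self, Function.update_self]
    rw [mul_one, mul_zero, zero_add, ← mul_assoc, ← Real.exp_add]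
  set I := ∫ s in (0:ℝ)..t, clusterHazard n β₁ β₂ θ₁ θ₂ α γ (Function.update x i 0) l τ i s
    with hI
  have hint1 : (∫ s in (0:ℝ)..t,
      clusterHazard n β₁ β₂ θ₁ θ₂ α γ (Function.update x i 1) l τ i s) = Real.exp β₁ * I := by
    rw [hI, ← intervalIntegral.integral_const_mul]
    exact intervalIntegral.integral_congr fun s _ => hfac s
  have hSE : expectedOutcome n β₁ β₂ θ₁ θ₂ α γ (Function.update x i 1) l τ i t
      - expectedOutcome n β₁ β₂ θ₁ θ₂ α γ (Function.update x i 0) l τ i t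
      = Real.exp (-I) - Real.exp (-(Real.exp β₁ * I)) := by
    unfold expectedOutcome
    rw [hint1, ← hI]
    ring
  refine ⟨fun hβ => ?_, fun hβ => ?_, fun hβ => ?_⟩
  · rw [hSE]
    have : Real.exp β₁ * I < I := by
      nlinarith [Real.exp_lt_one_iff.mpr hβ]
    have := Real.exp_lt_exp.mpr (by linarith : -I < -(Real.exp β₁ * I))
    linarith
  · rw [hSE, hβ, Real.exp_zero, one_mul, sub_self]
  · rw [hSE]
    have : I < Real.exp β₁ * I := by
      nlinarith [Real.one_lt_exp_iff.mpr hβ]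
    have := Real.exp_lt_exp.mpr (by linarith : -(Real.exp β₁ * I) < -I)
    linarith
end

section
/- Under the pairwise Cox-type hazard model, with exposure-controlled expected potential infection outcome E[Y_i(t; x, h)] = 1 − exp(−∫₀ᵗ λ_i(s | x, h, l) ds), fix t > 0, the treatment x_i of individual i, an infection history h with times (t_j)_{j≠i}, and covariates l, and set B = ∫₀ᵗ exp(β₁x_i + θ₁l_i)·α(s) ds and C = ∫₀ᵗ exp(β₁x_i + θ₁l_i)·Σ_{j≠i} y_j(s)·γ(s − t_j)·exp(θ₂l_j) ds. If B < ∞ and 0 < C < ∞, then the exposure-controlled infectiousness effect IE_i(t, x_i, h) = E[Y_i(t; x_i, x_{(i)} = 1, h)] − E[Y_i(t; x_i, x_{(i)} = 0, h)] (contrasting all other individuals treated versus all untreated) satisfies: IE_i < 0 if β₂ < 0, IE_i = 0 if β₂ = 0, and IE_i > 0 if β₂ > 0. That is, the exposure-controlled infectiousness effect has the same sign as β₂. -/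
open MeasureTheory ENNReal

/-- Sign of the exposure-controlled infectiousness effect (Corollary 6): with
`B = ∫₀ᵗ exp(β₁ x_i + θ₁ l_i) α(s) ds` finite and
`C = ∫₀ᵗ exp(β₁ x_i + θ₁ l_i) Σ_{j≠i} y_j(s) γ(s - t_j) exp(θ₂ l_j) ds` finite and
positive, the effect `IE_i = E[Y_i(t; x_i, x_{(i)} = 1, h)] - E[Y_i(t; x_i, x_{(i)} = 0, h)]`
(all others treated versus all untreated) is negative, zero, or positive according to
the sign of `β₂`. -/
theorem exposure_controlled_infectiousness_effect_sign
    (n : ℕ) (β₁ β₂ θ₁ θ₂ : ℝ) (α γ : ℝ → ℝ)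
    (xi : ℝ) (l : Fin n → ℝ) (τ : Fin n → ℝ≥0∞)
    (hτ_pos : ∀ k, 0 < τ k)
    (i : Fin n) (t : ℝ) (ht : 0 < t)
    (hB_int : IntervalIntegrable
      (fun s => Real.exp (β₁ * xi + θ₁ * l i) * α s) volume 0 t)
    (hC_int : IntervalIntegrable
      (fun s => Real.exp (β₁ * xi + θ₁ * l i) *
        ∑ j ∈ Finset.univ.erase i,
          (if τ j < ENNReal.ofReal s then γ (s - (τ j).toReal) * Real.exp (θ₂ * l j)
           else 0)) volume 0 t)
    (hC_pos : 0 < ∫ s in (0:ℝ)..t,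
      Real.exp (β₁ * xi + θ₁ * l i) *
        ∑ j ∈ Finset.univ.erase i,
          (if τ j < ENNReal.ofReal s then γ (s - (τ j).toReal) * Real.exp (θ₂ * l j)
           else 0)) :
    (β₂ < 0 →
      expectedOutcome n β₁ β₂ θ₁ θ₂ α γ (fun j => if j = i then xi else 1) l τ i t
        - expectedOutcome n β₁ β₂ θ₁ θ₂ α γ (fun j => if j = i then xi else 0) l τ i t
        < 0) ∧
    (β₂ = 0 →
      expectedOutcome n β₁ β₂ θ₁ θ₂ α γ (fun j => if j = i then xi else 1) l τ i t
        - expectedOutcome n β₁ β₂ θ₁ θ₂ α γ (fun j => if j = i then xi else 0) l τ i t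
        = 0) ∧
    (0 < β₂ →
      0 < expectedOutcome n β₁ β₂ θ₁ θ₂ α γ (fun j => if j = i then xi else 1) l τ i t
        - expectedOutcome n β₁ β₂ θ₁ θ₂ α γ (fun j => if j = i then xi else 0) l τ i t) := by
  set E : ℝ := Real.exp (β₁ * xi + θ₁ * l i) with hEdef
  set F : ℝ := ∫ s in (0:ℝ)..t, E * α s with hFdef
  set G : ℝ := ∫ s in (0:ℝ)..t,
      E * ∑ j ∈ Finset.univ.erase i,
        (if τ j < ENNReal.ofReal s then γ (s - (τ j).toReal) * Real.exp (θ₂ * l j)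
         else 0) with hGdef
  have hout : ∀ c : ℝ,
      expectedOutcome n β₁ β₂ θ₁ θ₂ α γ (fun j => if j = i then xi else c) l τ i t
      = 1 - Real.exp (-(F + Real.exp (β₂ * c) * G)) := by
    intro c
    have heq : ∀ s : ℝ,
        clusterHazard n β₁ β₂ θ₁ θ₂ α γ (fun j => if j = i then xi else c) l τ i s
        = E * α s + Real.exp (β₂ * c) *
            (E * ∑ j ∈ Finset.univ.erase i,
              (if τ j < ENNReal.ofReal s then γ (s - (τ j).toReal) * Real.exp (θ₂ * l j)
               else 0)) := by
      intro s
      simp only [clusterHazard, hEdef, if_true]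
      rw [mul_add]
      congr 1
      rw [Finset.mul_sum, Finset.mul_sum, Finset.mul_sum]
      refine Finset.sum_congr rfl fun j hj => ?_
      rw [if_neg (Finset.ne_of_mem_erase hj)]
      split_ifs with h
      · rw [Real.exp_add (β₂ * c) (θ₂ * l j)]; ring
      · ring
    have hint :
        (∫ s in (0:ℝ)..t,
          clusterHazard n β₁ β₂ θ₁ θ₂ α γ (fun j => if j = i then xi else c) l τ i s)
        = F + Real.exp (β₂ * c) * G := by
      have h2 : (∫ s in (0:ℝ)..t, Real.exp (β₂ * c) *
          (E * ∑ j ∈ Finset.univ.erase i,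
            (if τ j < ENNReal.ofReal s then γ (s - (τ j).toReal) * Real.exp (θ₂ * l j)
             else 0))) = Real.exp (β₂ * c) * G :=
        intervalIntegral.integral_const_mul _ _
      simp only [heq]
      rw [intervalIntegral.integral_add hB_int (hC_int.const_mul _), h2]
    rw [expectedOutcome, hint]
  rw [hout 1, hout 0]
  have hG : 0 < G := hC_pos
  have key : ∀ b : ℝ,
      (1 - Real.exp (-(F + Real.exp (β₂ * 1) * G))) -
        (1 - Real.exp (-(F + Real.exp (β₂ * 0) * G)))
      = Real.exp (-(F + G)) - Real.exp (-(F + Real.exp β₂ * G)) := by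
    intro _; rw [mul_one, mul_zero, Real.exp_zero, one_mul]; ring
  rw [key 0]
  refine ⟨fun hb => ?_, fun hb => ?_, fun hb => ?_⟩
  · have h1 : Real.exp β₂ < 1 := Real.exp_lt_one_iff.mpr hb
    have : Real.exp β₂ * G < G := by nlinarith
    have := Real.exp_lt_exp.mpr (show -(F + G) < -(F + Real.exp β₂ * G) by linarith)
    linarith
  · simp [hb]
  · have h1 : 1 < Real.exp β₂ := by
      have := Real.exp_lt_exp.mpr hb
      simpa using this
    have : G < Real.exp β₂ * G := by nlinarith
    have := Real.exp_lt_exp.mpr (show -(F + Real.exp β₂ * G) < -(F + G) by linarith)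
    linarith
end
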